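/- Let Λ₀ be a linearly ordered commutative group with zero and suppose ρ₁, …, ρₙ ∈ Λ are such that the product ρ₁⋯ρₙ has topologically nilpotent inverse (i.e., (ρ₁⋯ρₙ)^{−k} → 0 as k → ∞) and each ρᵢ ≥ 1. Then at least one ρᵢ has topologically nilpotent inverse. -/

import Mathlib

/-- Topological nilpotence in a (multiplicative) linearly ordered commutative group:
the powers tend to zero, i.e. are eventually below any given element. -/
def IsTopNilpotentGrp {Λ : Type*} [CommGroup Λ] [LinearOrder Λ] [IsOrderedMonoid Λ] (σ : Λ) : Prop :=
  ∀ ε : Λ, ∃ n₀ : ℕ, ∀ n ≥ n₀, σ ^ n ≤ ε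

theorem stmt_14 {Λ : Type*} [CommGroup Λ] [LinearOrder Λ] [IsOrderedMonoid Λ] {n : ℕ} (hn : 0 < n)
    (ρ : Fin n → Λ) (h1 : ∀ i, 1 ≤ ρ i)
    (h : IsTopNilpotentGrp (∏ i, ρ i)⁻¹) :
    ∃ i, IsTopNilpotentGrp ((ρ i)⁻¹) := by
  haveI : NeZero n := ⟨hn.ne'⟩
  obtain ⟨i, -, hi⟩ := Finset.exists_max_image Finset.univ ρ ⟨0, Finset.mem_univ 0⟩
  refine ⟨i, fun ε => ?_⟩
  obtain ⟨n₀, hn₀⟩ := h ε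
  have hprod : (∏ j, ρ j) ≤ (ρ i) ^ n := by
    calc (∏ j, ρ j) ≤ ∏ _j : Fin n, ρ i :=
          Finset.prod_le_prod' fun j _ => hi j (Finset.mem_univ j)
    _ = (ρ i) ^ n := by simp
  have hinv : ((ρ i)⁻¹) ^ n ≤ (∏ j, ρ j)⁻¹ := by
    rw [inv_pow]
    exact inv_le_inv_iff.mpr hprod
  have hle1 : (ρ i)⁻¹ ≤ 1 := inv_le_one'.mpr (h1 i)
  refine ⟨n * n₀, fun m hm => ?_⟩
  calc ((ρ i)⁻¹) ^ m ≤ ((ρ i)⁻¹) ^ (n * n₀) := pow_le_pow_right_of_le_one' hle1 hm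
    _ = (((ρ i)⁻¹) ^ n) ^ n₀ := by rw [pow_mul]
    _ ≤ ((∏ j, ρ j)⁻¹) ^ n₀ := pow_le_pow_left' hinv n₀
    _ ≤ ε := hn₀ n₀ le_rfl
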